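/- Let γ₁ : [0, L₁] → ℝ² and γ₂ : [0, L₂] → ℝ² be twice continuously differentiable unit-speed curves such that γ₂(r₁) ≠ γ₁(r) for all (r, r₁) ∈ [0, L₁] × [0, L₂]. Write τ(r, r₁) = ‖γ₂(r₁) − γ₁(r)‖ and e(r, r₁) = (γ₂(r₁) − γ₁(r))/τ(r, r₁). Assume that for every (r, r₁): ⟨γ₁''(r), e(r, r₁)⟩ · τ(r, r₁) > 2·(1 − ⟨γ₁'(r), e(r, r₁)⟩²) and −⟨γ₂''(r₁), e(r, r₁)⟩ · τ(r, r₁) > 2·(1 − ⟨γ₂'(r₁), e(r, r₁)⟩²). Then there is at most one pair (r, r₁) ∈ [0, L₁] × [0, L₂] such that ⟨γ₁'(r), γ₂(r₁) − γ₁(r)⟩ = 0 and ⟨γ₂'(r₁), γ₂(r₁) − γ₁(r)⟩ = 0, i.e. at most one chord perpendicular to both curves. -/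

import Mathlib

open scoped InnerProductSpace

lemma curve_comp_deriv {L : ℝ} {γ : ℝ → EuclideanSpace ℝ (Fin 2)}
    (h : ContDiffOn ℝ 2 γ (Set.Icc 0 L)) {x Δ : ℝ}
    (hx : x ∈ Set.Icc 0 L) (hxd : x + Δ ∈ Set.Icc 0 L) :
    ∀ t ∈ Set.Icc (0:ℝ) 1,
      (x + t * Δ ∈ Set.Icc 0 L) ∧
      HasDerivWithinAt (fun s => γ (x + s * Δ))
        (Δ • derivWithin γ (Set.Icc 0 L) (x + t * Δ)) (Set.Icc 0 1) t ∧
      HasDerivWithinAt (fun s => Δ • derivWithin γ (Set.Icc 0 L) (x + s * Δ))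
        ((Δ ^ 2) • derivWithin (derivWithin γ (Set.Icc 0 L)) (Set.Icc 0 L) (x + t * Δ))
        (Set.Icc 0 1) t := by
  have hmaps : Set.MapsTo (fun s => x + s * Δ) (Set.Icc 0 1) (Set.Icc 0 L) := by
    intro t ht
    obtain ⟨ht0, ht1⟩ := ht
    constructor
    · show (0:ℝ) ≤ x + t * Δ
      nlinarith [mul_nonneg (sub_nonneg.2 ht1) hx.1, mul_nonneg ht0 hxd.1]
    · show x + t * Δ ≤ L
      nlinarith [mul_nonneg (sub_nonneg.2 ht1) (sub_nonneg.2 hx.2),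
        mul_nonneg ht0 (sub_nonneg.2 hxd.2)]
  intro t ht
  refine ⟨hmaps ht, ?_⟩
  rcases eq_or_ne Δ 0 with rfl | hΔ
  · constructor
    · simpa using (hasDerivWithinAt_const t (Set.Icc (0:ℝ) 1) (γ x))
    · simpa using (hasDerivWithinAt_const t (Set.Icc (0:ℝ) 1)
        ((0:ℝ) • derivWithin γ (Set.Icc 0 L) x))
  · have hL : 0 < L := by
      by_contra hL
      push_neg at hL
      have hx0 : x = 0 := le_antisymm (hx.2.trans hL) hx.1
      have hxd0 : x + Δ = 0 := le_antisymm (hxd.2.trans hL) hxd.1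
      apply hΔ; linarith
    have hUD : UniqueDiffOn ℝ (Set.Icc (0:ℝ) L) := uniqueDiffOn_Icc hL
    have hc : HasDerivWithinAt (fun s => x + s * Δ) Δ (Set.Icc 0 1) t := by
      simpa using (((hasDerivAt_id t).mul_const Δ).const_add x).hasDerivWithinAt
    have hd1 : DifferentiableOn ℝ γ (Set.Icc 0 L) := h.differentiableOn (by norm_num)
    have hw : ContDiffOn ℝ 1 (derivWithin γ (Set.Icc 0 L)) (Set.Icc 0 L) :=
      h.derivWithin hUD (by norm_num)
    constructor
    · exact (hd1 _ (hmaps ht)).hasDerivWithinAt.scomp t hc hmaps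
    · have h2 : HasDerivWithinAt
          (fun s => derivWithin γ (Set.Icc 0 L) (x + s * Δ))
          (Δ • derivWithin (derivWithin γ (Set.Icc 0 L)) (Set.Icc 0 L) (x + t * Δ))
          (Set.Icc 0 1) t :=
        HasDerivWithinAt.scomp (g₁ := derivWithin γ (Set.Icc 0 L)) t
          ((hw.differentiableOn one_ne_zero) _ (hmaps ht)).hasDerivWithinAt hc hmaps
      have := h2.const_smul Δ
      simpa [smul_smul, pow_two, Pi.smul_def] using this

lemma proj_bound {E : Type*} [NormedAddCommGroup E] [InnerProductSpace ℝ E]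
    (v w e : E) (he : ‖e‖ = 1) :
    ⟪v - w, v - w⟫_ℝ - ⟪v - w, e⟫_ℝ ^ 2
      ≤ 2 * (⟪v, v⟫_ℝ - ⟪v, e⟫_ℝ ^ 2) + 2 * (⟪w, w⟫_ℝ - ⟪w, e⟫_ℝ ^ 2) := by
  have hee : ⟪e, e⟫_ℝ = 1 := by
    rw [real_inner_self_eq_norm_sq, he]; norm_num
  have h1 : ∀ x : E, ⟪x - ⟪x, e⟫_ℝ • e, x - ⟪x, e⟫_ℝ • e⟫_ℝ = ⟪x, x⟫_ℝ - ⟪x, e⟫_ℝ ^ 2 := by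
    intro x
    simp only [inner_sub_left, inner_sub_right, real_inner_smul_left, real_inner_smul_right, hee]
    rw [real_inner_comm e x]
    ring
  have h2 : (v - w) - ⟪v - w, e⟫_ℝ • e = (v - ⟪v, e⟫_ℝ • e) - (w - ⟪w, e⟫_ℝ • e) := by
    rw [inner_sub_left]; module
  have h3 : ⟪v - w, v - w⟫_ℝ - ⟪v - w, e⟫_ℝ ^ 2
      = ‖(v - ⟪v, e⟫_ℝ • e) - (w - ⟪w, e⟫_ℝ • e)‖ ^ 2 := by
    rw [← h1 (v - w), h2, real_inner_self_eq_norm_sq]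
  have h4 : ⟪v, v⟫_ℝ - ⟪v, e⟫_ℝ ^ 2 = ‖v - ⟪v, e⟫_ℝ • e‖ ^ 2 := by
    rw [← h1 v, real_inner_self_eq_norm_sq]
  have h5 : ⟪w, w⟫_ℝ - ⟪w, e⟫_ℝ ^ 2 = ‖w - ⟪w, e⟫_ℝ • e‖ ^ 2 := by
    rw [← h1 w, real_inner_self_eq_norm_sq]
  rw [h3, h4, h5]
  have hle := norm_sub_le (v - ⟪v, e⟫_ℝ • e) (w - ⟪w, e⟫_ℝ • e)
  nlinarith [norm_nonneg ((v - ⟪v, e⟫_ℝ • e) - (w - ⟪w, e⟫_ℝ • e)),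
    norm_nonneg (v - ⟪v, e⟫_ℝ • e), norm_nonneg (w - ⟪w, e⟫_ℝ • e),
    sq_nonneg (‖v - ⟪v, e⟫_ℝ • e‖ - ‖w - ⟪w, e⟫_ℝ • e‖),
    mul_self_le_mul_self (norm_nonneg ((v - ⟪v, e⟫_ℝ • e) - (w - ⟪w, e⟫_ℝ • e))) hle]

lemma defocus_alg {E : Type*} [NormedAddCommGroup E] [InnerProductSpace ℝ E]
    (u₁ u₂ k₁ k₂ q : E) (Δ Δ₁ : ℝ) (hq : q ≠ 0) (hu₁ : ‖u₁‖ = 1) (hu₂ : ‖u₂‖ = 1)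
    (hA : ⟪k₁, ‖q‖⁻¹ • q⟫_ℝ * ‖q‖ > 2 * (1 - ⟪u₁, ‖q‖⁻¹ • q⟫_ℝ ^ 2))
    (hB : -⟪k₂, ‖q‖⁻¹ • q⟫_ℝ * ‖q‖ > 2 * (1 - ⟪u₂, ‖q‖⁻¹ • q⟫_ℝ ^ 2))
    (hΔ : Δ ≠ 0 ∨ Δ₁ ≠ 0) :
    ((⟪Δ₁ • u₂ - Δ • u₁, Δ₁ • u₂ - Δ • u₁⟫_ℝ + ⟪Δ₁ ^ 2 • k₂ - Δ ^ 2 • k₁, q⟫_ℝ) * ‖q‖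
      - ⟪Δ₁ • u₂ - Δ • u₁, q⟫_ℝ *
        ((⟪q, Δ₁ • u₂ - Δ • u₁⟫_ℝ + ⟪Δ₁ • u₂ - Δ • u₁, q⟫_ℝ) / (2 * ‖q‖))) / ‖q‖ ^ 2
      < 0 := by
  have hτ : 0 < ‖q‖ := norm_pos_iff.2 hq
  have hee : ‖(‖q‖⁻¹ • q : E)‖ = 1 := by
    rw [norm_smul, Real.norm_eq_abs, abs_of_pos (inv_pos.2 hτ)]
    field_simp
  have hxq : ∀ x : E, ⟪x, q⟫_ℝ = ‖q‖ * ⟪x, ‖q‖⁻¹ • q⟫_ℝ := by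
    intro x
    rw [real_inner_smul_right]
    field_simp
  set a := ⟪u₁, ‖q‖⁻¹ • q⟫_ℝ with hadef
  set b := ⟪u₂, ‖q‖⁻¹ • q⟫_ℝ with hbdef
  set A := ⟪k₁, ‖q‖⁻¹ • q⟫_ℝ with hAdef
  set B := ⟪k₂, ‖q‖⁻¹ • q⟫_ℝ with hBdef
  have hGq : ⟪Δ₁ • u₂ - Δ • u₁, q⟫_ℝ = ‖q‖ * (Δ₁ * b - Δ * a) := by
    rw [inner_sub_left, real_inner_smul_left, real_inner_smul_left, hxq u₂, hxq u₁,
      ← hadef, ← hbdef]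
    ring
  have hqG : ⟪q, Δ₁ • u₂ - Δ • u₁⟫_ℝ = ‖q‖ * (Δ₁ * b - Δ * a) := by
    rw [real_inner_comm, hGq]
  have hKq : ⟪Δ₁ ^ 2 • k₂ - Δ ^ 2 • k₁, q⟫_ℝ = ‖q‖ * (Δ₁ ^ 2 * B - Δ ^ 2 * A) := by
    rw [inner_sub_left, real_inner_smul_left, real_inner_smul_left, hxq k₂, hxq k₁,
      ← hAdef, ← hBdef]
    ring
  have hGG : ⟪Δ₁ • u₂ - Δ • u₁, Δ₁ • u₂ - Δ • u₁⟫_ℝ = ‖Δ₁ • u₂ - Δ • u₁‖ ^ 2 :=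
    real_inner_self_eq_norm_sq _
  have hbound : ‖Δ₁ • u₂ - Δ • u₁‖ ^ 2 - (Δ₁ * b - Δ * a) ^ 2
      ≤ 2 * (Δ₁ ^ 2 * (1 - b ^ 2)) + 2 * (Δ ^ 2 * (1 - a ^ 2)) := by
    have hp := proj_bound (Δ₁ • u₂) (Δ • u₁) (‖q‖⁻¹ • q) hee
    have e1 : ⟪Δ₁ • u₂ - Δ • u₁, Δ₁ • u₂ - Δ • u₁⟫_ℝ = ‖Δ₁ • u₂ - Δ • u₁‖ ^ 2 := hGG
    have e2 : ⟪Δ₁ • u₂ - Δ • u₁, ‖q‖⁻¹ • q⟫_ℝ = Δ₁ * b - Δ * a := by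
      rw [inner_sub_left, real_inner_smul_left, real_inner_smul_left, ← hadef, ← hbdef]
    have e3 : ⟪Δ₁ • u₂, Δ₁ • u₂⟫_ℝ = Δ₁ ^ 2 := by
      rw [real_inner_smul_left, real_inner_smul_right, real_inner_self_eq_norm_sq, hu₂]
      ring
    have e4 : ⟪Δ • u₁, Δ • u₁⟫_ℝ = Δ ^ 2 := by
      rw [real_inner_smul_left, real_inner_smul_right, real_inner_self_eq_norm_sq, hu₁]
      ring
    have e5 : ⟪Δ₁ • u₂, ‖q‖⁻¹ • q⟫_ℝ = Δ₁ * b := by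
      rw [real_inner_smul_left, ← hbdef]
    have e6 : ⟪Δ • u₁, ‖q‖⁻¹ • q⟫_ℝ = Δ * a := by
      rw [real_inner_smul_left, ← hadef]
    rw [e1, e2, e3, e4, e5, e6] at hp
    nlinarith [hp]
  have hstrict : ‖q‖ * (Δ₁ ^ 2 * B - Δ ^ 2 * A)
      < -(2 * (Δ₁ ^ 2 * (1 - b ^ 2))) - 2 * (Δ ^ 2 * (1 - a ^ 2)) := by
    rcases hΔ with h | h
    · have h1 : Δ ^ 2 * (2 * (1 - a ^ 2)) < Δ ^ 2 * (A * ‖q‖) :=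
        mul_lt_mul_of_pos_left hA (by positivity)
      have h2 : Δ₁ ^ 2 * (2 * (1 - b ^ 2)) ≤ Δ₁ ^ 2 * (-B * ‖q‖) :=
        mul_le_mul_of_nonneg_left hB.le (sq_nonneg Δ₁)
      nlinarith [h1, h2]
    · have h1 : Δ ^ 2 * (2 * (1 - a ^ 2)) ≤ Δ ^ 2 * (A * ‖q‖) :=
        mul_le_mul_of_nonneg_left hA.le (sq_nonneg Δ)
      have h2 : Δ₁ ^ 2 * (2 * (1 - b ^ 2)) < Δ₁ ^ 2 * (-B * ‖q‖) :=
        mul_lt_mul_of_pos_left hB (by positivity)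
      nlinarith [h1, h2]
  have hkey : ‖Δ₁ • u₂ - Δ • u₁‖ ^ 2 - (Δ₁ * b - Δ * a) ^ 2
      + ‖q‖ * (Δ₁ ^ 2 * B - Δ ^ 2 * A) < 0 := by linarith
  rw [hGG, hGq, hqG, hKq]
  have heq : ((‖Δ₁ • u₂ - Δ • u₁‖ ^ 2 + ‖q‖ * (Δ₁ ^ 2 * B - Δ ^ 2 * A)) * ‖q‖
      - ‖q‖ * (Δ₁ * b - Δ * a) *
        ((‖q‖ * (Δ₁ * b - Δ * a) + ‖q‖ * (Δ₁ * b - Δ * a)) / (2 * ‖q‖))) / ‖q‖ ^ 2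
      = (‖Δ₁ • u₂ - Δ • u₁‖ ^ 2 - (Δ₁ * b - Δ * a) ^ 2
          + ‖q‖ * (Δ₁ ^ 2 * B - Δ ^ 2 * A)) / ‖q‖ := by
    field_simp
    ring
  rw [heq]
  exact div_neg_of_neg_of_pos hkey hτ


/-- Uniqueness of the chord perpendicular to two defocusing curves: for `C²` unit-speed
plane curves `γ₁` on `[0, L₁]` and `γ₂` on `[0, L₂]` which never meet, if the defocusing
inequalities `⟨γ₁'', e⟩ τ > 2(1 − ⟨γ₁', e⟩²)` and `−⟨γ₂'', e⟩ τ > 2(1 − ⟨γ₂', e⟩²)` hold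
at every pair of parameters (with `τ = ‖γ₂(r₁) − γ₁(r)‖` and `e` the unit chord vector),
then there is at most one chord perpendicular to both curves. -/
theorem unique_perpendicular_chord
    (L₁ L₂ : ℝ) (γ₁ γ₂ : ℝ → EuclideanSpace ℝ (Fin 2))
    (h₁ : ContDiffOn ℝ 2 γ₁ (Set.Icc 0 L₁)) (h₂ : ContDiffOn ℝ 2 γ₂ (Set.Icc 0 L₂))
    (hu₁ : ∀ r ∈ Set.Icc 0 L₁, ‖derivWithin γ₁ (Set.Icc 0 L₁) r‖ = 1)
    (hu₂ : ∀ r₁ ∈ Set.Icc 0 L₂, ‖derivWithin γ₂ (Set.Icc 0 L₂) r₁‖ = 1)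
    (hne : ∀ r ∈ Set.Icc 0 L₁, ∀ r₁ ∈ Set.Icc 0 L₂, γ₂ r₁ ≠ γ₁ r)
    (hdef₁ : ∀ r ∈ Set.Icc 0 L₁, ∀ r₁ ∈ Set.Icc 0 L₂,
      ⟪derivWithin (derivWithin γ₁ (Set.Icc 0 L₁)) (Set.Icc 0 L₁) r,
          (‖γ₂ r₁ - γ₁ r‖)⁻¹ • (γ₂ r₁ - γ₁ r)⟫_ℝ * ‖γ₂ r₁ - γ₁ r‖
        > 2 * (1 - ⟪derivWithin γ₁ (Set.Icc 0 L₁) r,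
            (‖γ₂ r₁ - γ₁ r‖)⁻¹ • (γ₂ r₁ - γ₁ r)⟫_ℝ ^ 2))
    (hdef₂ : ∀ r ∈ Set.Icc 0 L₁, ∀ r₁ ∈ Set.Icc 0 L₂,
      -⟪derivWithin (derivWithin γ₂ (Set.Icc 0 L₂)) (Set.Icc 0 L₂) r₁,
          (‖γ₂ r₁ - γ₁ r‖)⁻¹ • (γ₂ r₁ - γ₁ r)⟫_ℝ * ‖γ₂ r₁ - γ₁ r‖
        > 2 * (1 - ⟪derivWithin γ₂ (Set.Icc 0 L₂) r₁,
            (‖γ₂ r₁ - γ₁ r‖)⁻¹ • (γ₂ r₁ - γ₁ r)⟫_ℝ ^ 2)) :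
    ∀ r ∈ Set.Icc 0 L₁, ∀ r' ∈ Set.Icc 0 L₁, ∀ r₁ ∈ Set.Icc 0 L₂, ∀ r₁' ∈ Set.Icc 0 L₂,
      ⟪derivWithin γ₁ (Set.Icc 0 L₁) r, γ₂ r₁ - γ₁ r⟫_ℝ = 0 →
      ⟪derivWithin γ₂ (Set.Icc 0 L₂) r₁, γ₂ r₁ - γ₁ r⟫_ℝ = 0 →
      ⟪derivWithin γ₁ (Set.Icc 0 L₁) r', γ₂ r₁' - γ₁ r'⟫_ℝ = 0 →
      ⟪derivWithin γ₂ (Set.Icc 0 L₂) r₁', γ₂ r₁' - γ₁ r'⟫_ℝ = 0 →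
      r = r' ∧ r₁ = r₁' := by
  intro r hr r' hr' r₁ hr₁ r₁' hr₁' hp1 hp2 hp1' hp2'
  by_contra hcon
  set Δ := r' - r with hΔ
  set Δ₁ := r₁' - r₁ with hΔ₁
  have hΔne : Δ ≠ 0 ∨ Δ₁ ≠ 0 := by
    by_contra hb
    push_neg at hb
    exact hcon ⟨(sub_eq_zero.1 hb.1).symm, (sub_eq_zero.1 hb.2).symm⟩
  have hrd : r + Δ ∈ Set.Icc 0 L₁ := by
    have : r + Δ = r' := by rw [hΔ]; ring
    rw [this]; exact hr'
  have hrd₁ : r₁ + Δ₁ ∈ Set.Icc 0 L₂ := by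
    have : r₁ + Δ₁ = r₁' := by rw [hΔ₁]; ring
    rw [this]; exact hr₁'
  have H1 := curve_comp_deriv h₁ hr hrd
  have H2 := curve_comp_deriv h₂ hr₁ hrd₁
  set F : ℝ → ℝ := fun t =>
    ⟪Δ₁ • derivWithin γ₂ (Set.Icc 0 L₂) (r₁ + t * Δ₁)
        - Δ • derivWithin γ₁ (Set.Icc 0 L₁) (r + t * Δ),
      γ₂ (r₁ + t * Δ₁) - γ₁ (r + t * Δ)⟫_ℝ /
    Real.sqrt ⟪γ₂ (r₁ + t * Δ₁) - γ₁ (r + t * Δ), γ₂ (r₁ + t * Δ₁) - γ₁ (r + t * Δ)⟫_ℝ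
    with hFdef
  have key : ∀ t ∈ Set.Icc (0:ℝ) 1,
      ∃ d, HasDerivWithinAt F d (Set.Icc 0 1) t ∧ d < 0 := by
    intro t ht
    obtain ⟨hx, hdγ₁, hdw₁⟩ := H1 t ht
    obtain ⟨hy, hdγ₂, hdw₂⟩ := H2 t ht
    have hgne : γ₂ (r₁ + t * Δ₁) - γ₁ (r + t * Δ) ≠ 0 :=
      sub_ne_zero.2 (hne _ hx _ hy)
    have hg : HasDerivWithinAt (fun s => γ₂ (r₁ + s * Δ₁) - γ₁ (r + s * Δ))
        (Δ₁ • derivWithin γ₂ (Set.Icc 0 L₂) (r₁ + t * Δ₁)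
          - Δ • derivWithin γ₁ (Set.Icc 0 L₁) (r + t * Δ)) (Set.Icc 0 1) t :=
      hdγ₂.sub hdγ₁
    have hG : HasDerivWithinAt
        (fun s => Δ₁ • derivWithin γ₂ (Set.Icc 0 L₂) (r₁ + s * Δ₁)
          - Δ • derivWithin γ₁ (Set.Icc 0 L₁) (r + s * Δ))
        (Δ₁ ^ 2 • derivWithin (derivWithin γ₂ (Set.Icc 0 L₂)) (Set.Icc 0 L₂) (r₁ + t * Δ₁)
          - Δ ^ 2 • derivWithin (derivWithin γ₁ (Set.Icc 0 L₁)) (Set.Icc 0 L₁) (r + t * Δ))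
        (Set.Icc 0 1) t := hdw₂.sub hdw₁
    have hN := HasDerivWithinAt.inner ℝ hG hg
    have hφ := HasDerivWithinAt.inner ℝ hg hg
    have hφne : ⟪γ₂ (r₁ + t * Δ₁) - γ₁ (r + t * Δ),
        γ₂ (r₁ + t * Δ₁) - γ₁ (r + t * Δ)⟫_ℝ ≠ 0 := inner_self_ne_zero.2 hgne
    have hf := hφ.sqrt hφne
    have hsqrt : Real.sqrt ⟪γ₂ (r₁ + t * Δ₁) - γ₁ (r + t * Δ),
        γ₂ (r₁ + t * Δ₁) - γ₁ (r + t * Δ)⟫_ℝ = ‖γ₂ (r₁ + t * Δ₁) - γ₁ (r + t * Δ)‖ := by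
      rw [real_inner_self_eq_norm_mul_norm]
      exact Real.sqrt_mul_self (norm_nonneg _)
    have hfne : Real.sqrt ⟪γ₂ (r₁ + t * Δ₁) - γ₁ (r + t * Δ),
        γ₂ (r₁ + t * Δ₁) - γ₁ (r + t * Δ)⟫_ℝ ≠ 0 := by
      rw [hsqrt]
      exact (norm_pos_iff.2 hgne).ne'
    refine ⟨_, hN.div hf hfne, ?_⟩
    show ((⟪Δ₁ • derivWithin γ₂ (Set.Icc 0 L₂) (r₁ + t * Δ₁)
            - Δ • derivWithin γ₁ (Set.Icc 0 L₁) (r + t * Δ),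
          Δ₁ • derivWithin γ₂ (Set.Icc 0 L₂) (r₁ + t * Δ₁)
            - Δ • derivWithin γ₁ (Set.Icc 0 L₁) (r + t * Δ)⟫_ℝ
        + ⟪Δ₁ ^ 2 • derivWithin (derivWithin γ₂ (Set.Icc 0 L₂)) (Set.Icc 0 L₂) (r₁ + t * Δ₁)
            - Δ ^ 2 • derivWithin (derivWithin γ₁ (Set.Icc 0 L₁)) (Set.Icc 0 L₁) (r + t * Δ),
          γ₂ (r₁ + t * Δ₁) - γ₁ (r + t * Δ)⟫_ℝ)
        * Real.sqrt ⟪γ₂ (r₁ + t * Δ₁) - γ₁ (r + t * Δ),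
            γ₂ (r₁ + t * Δ₁) - γ₁ (r + t * Δ)⟫_ℝ
      - ⟪Δ₁ • derivWithin γ₂ (Set.Icc 0 L₂) (r₁ + t * Δ₁)
            - Δ • derivWithin γ₁ (Set.Icc 0 L₁) (r + t * Δ),
          γ₂ (r₁ + t * Δ₁) - γ₁ (r + t * Δ)⟫_ℝ
        * ((⟪γ₂ (r₁ + t * Δ₁) - γ₁ (r + t * Δ),
              Δ₁ • derivWithin γ₂ (Set.Icc 0 L₂) (r₁ + t * Δ₁)
                - Δ • derivWithin γ₁ (Set.Icc 0 L₁) (r + t * Δ)⟫_ℝ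
            + ⟪Δ₁ • derivWithin γ₂ (Set.Icc 0 L₂) (r₁ + t * Δ₁)
                - Δ • derivWithin γ₁ (Set.Icc 0 L₁) (r + t * Δ),
              γ₂ (r₁ + t * Δ₁) - γ₁ (r + t * Δ)⟫_ℝ)
          / (2 * Real.sqrt ⟪γ₂ (r₁ + t * Δ₁) - γ₁ (r + t * Δ),
              γ₂ (r₁ + t * Δ₁) - γ₁ (r + t * Δ)⟫_ℝ)))
      / Real.sqrt ⟪γ₂ (r₁ + t * Δ₁) - γ₁ (r + t * Δ),
          γ₂ (r₁ + t * Δ₁) - γ₁ (r + t * Δ)⟫_ℝ ^ 2 < 0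
    rw [hsqrt]
    exact defocus_alg _ _ _ _ _ Δ Δ₁ hgne (hu₁ _ hx) (hu₂ _ hy)
      (hdef₁ _ hx _ hy) (hdef₂ _ hx _ hy) hΔne
  have hcont : ContinuousOn F (Set.Icc 0 1) := by
    intro t ht
    obtain ⟨d, hd, _⟩ := key t ht
    exact hd.continuousWithinAt
  have hanti : StrictAntiOn F (Set.Icc 0 1) := by
    apply strictAntiOn_of_deriv_neg (convex_Icc 0 1) hcont
    intro t ht
    rw [interior_Icc] at ht
    obtain ⟨d, hd, hdneg⟩ := key t (Set.mem_Icc_of_Ioo ht)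
    have hda : HasDerivAt F d t := hd.hasDerivAt (Icc_mem_nhds ht.1 ht.2)
    rw [hda.deriv]
    exact hdneg
  have hF0 : F 0 = 0 := by
    rw [hFdef]
    simp only [zero_mul, add_zero, inner_sub_left, real_inner_smul_left, hp1, hp2,
      mul_zero, sub_zero, zero_div]
  have hF1 : F 1 = 0 := by
    have e1 : r + 1 * Δ = r' := by rw [hΔ]; ring
    have e2 : r₁ + 1 * Δ₁ = r₁' := by rw [hΔ₁]; ring
    rw [hFdef]
    simp only [e1, e2, inner_sub_left, real_inner_smul_left, hp1', hp2',
      mul_zero, sub_zero, zero_div]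
  have hlt := hanti (by norm_num : (0:ℝ) ∈ Set.Icc (0:ℝ) 1)
    (by norm_num : (1:ℝ) ∈ Set.Icc (0:ℝ) 1) zero_lt_one
  rw [hF0, hF1] at hlt
  exact lt_irrefl 0 hlt
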